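/- For every [k,d,n] prefix set-free family F, one has 2^d ≤ Σ_{i=k}^{n} C(n,i), where C(n,i) is the binomial coefficient; equivalently, d ≤ log₂ Σ_{i=k}^{n} C(n,i). -/

import Mathlib

open scoped Classical

noncomputable section

/-- A conflict-free coloring of a hyperedge set `E` with `k` colors: every hyperedge
has some color occurring on exactly one of its vertices. -/
def IsCFColoring {V : Type} {k : ℕ} (E : Set (Finset V)) (C : V → Fin k) : Prop :=
  ∀ e ∈ E, ∃ c : Fin k, (e.filter fun v => C v = c).card = 1

/-- A unique-maximum coloring of a hyperedge set `E` with `k` colors: every hyperedge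
has exactly one vertex whose color is maximum on the hyperedge. -/
def IsUMColoring {V : Type} {k : ℕ} (E : Set (Finset V)) (C : V → Fin k) : Prop :=
  ∀ e ∈ E, ∃! v, v ∈ e ∧ ∀ u ∈ e, C u ≤ C v

/-- An odd coloring of a hyperedge set `E` with `k` colors: every hyperedge
has some color occurring on an odd number of its vertices. -/
def IsOddColoring {V : Type} {k : ℕ} (E : Set (Finset V)) (C : V → Fin k) : Prop :=
  ∀ e ∈ E, ∃ c : Fin k, Odd ((e.filter fun v => C v = c).card)

/-- The conflict-free chromatic number of a hypergraph. -/
def cfNum {V : Type} (E : Set (Finset V)) : ℕ :=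
  sInf {k | ∃ C : V → Fin k, IsCFColoring E C}

/-- The unique-maximum chromatic number of a hypergraph. -/
def umNum {V : Type} (E : Set (Finset V)) : ℕ :=
  sInf {k | ∃ C : V → Fin k, IsUMColoring E C}

/-- The odd chromatic number of a hypergraph. -/
def oddNum {V : Type} (E : Set (Finset V)) : ℕ :=
  sInf {k | ∃ C : V → Fin k, IsOddColoring E C}

/-- The hyperedges of the path hypergraph of a graph `G`: vertex sets of simple paths. -/
def pathEdges {V : Type} (G : SimpleGraph V) : Set (Finset V) :=
  {S | ∃ (u v : V) (p : G.Walk u v), p.IsPath ∧ S = p.support.toFinset}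

/-- Unique-maximum chromatic number of a graph with respect to paths. -/
def UM {V : Type} (G : SimpleGraph V) : ℕ := umNum (pathEdges G)

/-- Conflict-free chromatic number of a graph with respect to paths. -/
def CF {V : Type} (G : SimpleGraph V) : ℕ := cfNum (pathEdges G)

/-- Odd chromatic number of a graph with respect to paths. -/
def ODD {V : Type} (G : SimpleGraph V) : ℕ := oddNum (pathEdges G)

/-- The complete binary tree with `d` levels (`2^d - 1` vertices), with vertices the
binary strings of length `< d`; each vertex `l` is adjacent to its children `b :: l`. -/
def binaryTree (d : ℕ) : SimpleGraph {l : List Bool // l.length < d} :=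
  SimpleGraph.fromRel fun a b => ∃ bit : Bool, b.1 = bit :: a.1

/-- `IsSubdivPaths G H f P` : the data `f` (branch vertices) and `P` (a path of `H` for
every edge of `G`) witness that `H` contains a subdivision of `G` as a subgraph:
`f` is injective, the paths are internally disjoint from each other and from the
branch vertices. -/
def IsSubdivPaths {V W : Type} (G : SimpleGraph V) (H : SimpleGraph W) (f : V → W)
    (P : ∀ u v, G.Adj u v → H.Walk (f u) (f v)) : Prop :=
  Function.Injective f ∧
  (∀ u v (h : G.Adj u v), (P u v h).IsPath) ∧
  (∀ u v (h : G.Adj u v), P v u h.symm = (P u v h).reverse) ∧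
  (∀ u v (h : G.Adj u v) (w : W),
    w ∈ (P u v h).support → w ≠ f u → w ≠ f v → w ∉ Set.range f) ∧
  (∀ u v (h : G.Adj u v) (u' v' : V) (h' : G.Adj u' v'), s(u, v) ≠ s(u', v') →
    ∀ w : W, w ∈ (P u v h).support → w ∈ (P u' v' h').support → w ∈ Set.range f)

/-- `H` contains a subdivision of `G` as a subgraph. -/
def ContainsSubdivision {V W : Type} (G : SimpleGraph V) (H : SimpleGraph W) : Prop :=
  ∃ f P, IsSubdivPaths G H f P

/-- `IsSubdivision G H f P` : the data `f`, `P` witness that `H` is (exactly) a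
subdivision of `G`: additionally to `IsSubdivPaths`, every vertex of `H` and every
edge of `H` comes from some path replacing an edge of `G`, or is a branch vertex. -/
def IsSubdivision {V W : Type} (G : SimpleGraph V) (H : SimpleGraph W) (f : V → W)
    (P : ∀ u v, G.Adj u v → H.Walk (f u) (f v)) : Prop :=
  IsSubdivPaths G H f P ∧
  (∀ w : W, w ∈ Set.range f ∨ ∃ u v h, w ∈ (P u v h).support) ∧
  (∀ a b : W, H.Adj a b ↔ ∃ u v h, s(a, b) ∈ (P u v h).edges)

/-- `H` is a subdivision of `G`. -/
def Subdivides {V W : Type} (G : SimpleGraph V) (H : SimpleGraph W) : Prop :=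
  ∃ f P, IsSubdivision G H f P

/-- A graph is UM-critical if every proper subgraph has strictly smaller
unique-maximum chromatic number with respect to paths. -/
def UMCritical {V : Type} (G : SimpleGraph V) : Prop :=
  ∀ G' : G.Subgraph, G' ≠ ⊤ → UM G'.coe < UM G

/-- A graph is `k`-UM-critical if it is UM-critical and its UM number equals `k`. -/
def UMCriticalK {V : Type} (k : ℕ) (G : SimpleGraph V) : Prop :=
  UMCritical G ∧ UM G = k

/-- A family of sequences of distinct elements of `Fin n` is prefix set-free if no
nonempty prefix of a member (including the member itself) has the same underlying set
as another member. -/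
def IsPSF {n : ℕ} (F : Finset (List (Fin n))) : Prop :=
  (∀ l ∈ F, l.Nodup) ∧
  ∀ A ∈ F, ∀ B ∈ F, A ≠ B →
    ∀ p : List (Fin n), p ≠ [] → p <+: A → p.toFinset ≠ B.toFinset

/-- A `[k,d,n]` prefix set-free family: ground set `Fin n`, every sequence of length at
least `k`, and at least `2^d` members. -/
def IsPSFFamily (k d n : ℕ) (F : Finset (List (Fin n))) : Prop :=
  IsPSF F ∧ (∀ l ∈ F, k ≤ l.length) ∧ 2 ^ d ≤ F.card

theorem stmt16 (k d n : ℕ) (F : Finset (List (Fin n))) (hF : IsPSFFamily k d n F) :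
    2 ^ d ≤ ∑ i ∈ Finset.Icc k n, n.choose i := by
  obtain ⟨⟨hnd, hpsf⟩, hlen, hcard⟩ := hF
  have hinj : Set.InjOn List.toFinset (F : Set (List (Fin n))) := by
    intro A hA B hB hAB
    by_contra hne
    rcases eq_or_ne A [] with rfl | hA0
    · have : B = [] := by
        have hB0 : B.toFinset = (∅ : Finset (Fin n)) := by simpa using hAB.symm
        simpa using hB0
      exact hne this.symm
    · exact hpsf A hA B hB hne A hA0 List.prefix_rfl hAB
  have himg : F.image List.toFinset ⊆
      Finset.univ.filter (fun S : Finset (Fin n) => k ≤ S.card) := by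
    intro S hS
    simp only [Finset.mem_image] at hS
    obtain ⟨l, hl, rfl⟩ := hS
    simp only [Finset.mem_filter, Finset.mem_univ, true_and]
    rw [List.toFinset_card_of_nodup (hnd l hl)]
    exact hlen l hl
  have hcount : (Finset.univ.filter (fun S : Finset (Fin n) => k ≤ S.card)).card
      = ∑ i ∈ Finset.Icc k n, n.choose i := by
    have hmem : ∀ S ∈ Finset.univ.filter (fun S : Finset (Fin n) => k ≤ S.card),
        S.card ∈ Finset.Icc k n := by
      intro S hS
      simp only [Finset.mem_filter] at hS
      simp only [Finset.mem_Icc]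
      exact ⟨hS.2, S.card_le_univ.trans_eq (by simp)⟩
    rw [Finset.card_eq_sum_card_fiberwise hmem]
    refine Finset.sum_congr rfl fun i hi => ?_
    simp only [Finset.mem_Icc] at hi
    rw [Finset.filter_filter]
    have : (Finset.univ.filter fun S : Finset (Fin n) => k ≤ S.card ∧ S.card = i)
        = Finset.powersetCard i Finset.univ := by
      ext S
      simp only [Finset.mem_filter, Finset.mem_univ, true_and, Finset.mem_powersetCard,
        Finset.subset_univ]
      exact ⟨fun h => h.2, fun h => ⟨by omega, h⟩⟩
    rw [this, Finset.card_powersetCard, Finset.card_univ, Fintype.card_fin]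
  calc 2 ^ d ≤ F.card := hcard
    _ = (F.image List.toFinset).card := (Finset.card_image_of_injOn hinj).symm
    _ ≤ (Finset.univ.filter (fun S : Finset (Fin n) => k ≤ S.card)).card :=
        Finset.card_le_card himg
    _ = ∑ i ∈ Finset.Icc k n, n.choose i := hcount
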